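/- Let U be a unitary on H satisfying the SSQW conditions, and let {η₁ˣ, η₂ˣ}_{x∈ℤ} be orthonormal bases of the H_x with U H_x ⊆ ℂη₁^{x−1} ⊕ H_x ⊕ ℂη₂^{x+1} for all x ∈ ℤ. If for some y ∈ ℤ there is an orthonormal basis {ζ₁ʸ, ζ₂ʸ} of H_y with U P_y = |η₁ʸ⟩⟨ζ₁ʸ| + |η₂^{y+1}⟩⟨ζ₂ʸ|, then there exist orthonormal bases {ζ₁ˣ, ζ₂ˣ} of H_x for every x ∈ ℤ such that U = Σ_{x∈ℤ} |η₁ˣ⟩⟨ζ₁ˣ| + |η₂^{x+1}⟩⟨ζ₂ˣ| (equivalently, U ζ₁ˣ = η₁ˣ and U ζ₂ˣ = η₂^{x+1} for all x ∈ ℤ). -/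

import Mathlib

noncomputable section

/-- `H = ⊕_{x∈ℤ} H_x`, the ℓ² direct sum with each `H_x` a copy of `ℂ²`. -/
abbrev H : Type := lp (fun _ : ℤ × Fin 2 => ℂ) 2

/-- The canonical orthonormal basis vector `eᵢˣ` of `H_x` viewed in `H`. -/
def e (x : ℤ) (i : Fin 2) : H := lp.single 2 (x, i) 1

/-- The subspace `H_x` of `H`. -/
def Hx (x : ℤ) : Submodule ℂ H := Submodule.span ℂ {e x 0, e x 1}

/-- The rank-one operator `|u⟩⟨v| : w ↦ ⟨v, w⟩ u`. -/
def ketbra (u v : H) : H →L[ℂ] H := ((innerSL ℂ) v).smulRight u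

/-- The orthogonal projection of `H` onto `H_x`. -/
def P (x : ℤ) : H →L[ℂ] H := ketbra (e x 0) (e x 0) + ketbra (e x 1) (e x 1)

/-- A unitary (linear isometric equivalence) viewed as a continuous linear map. -/
def clm (U : H ≃ₗᵢ[ℂ] H) : H →L[ℂ] H := U.toLinearIsometry.toContinuousLinearMap

/-- `{u, v}` is an orthonormal basis of the two dimensional space `H_x`. -/
def ONBx (x : ℤ) (u v : H) : Prop :=
  u ∈ Hx x ∧ v ∈ Hx x ∧ ‖u‖ = 1 ∧ ‖v‖ = 1 ∧ (inner ℂ u v : ℂ) = 0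

/-- The SSQW conditions: `U H_x ⊆ H_{x-1} ⊕ H_x ⊕ H_{x+1}` and
`rank(P_{x±1} U P_x) ≤ 1` for all `x`. -/
def SSQW (U : H ≃ₗᵢ[ℂ] H) : Prop :=
  (∀ x : ℤ, ∀ ψ ∈ Hx x, U ψ ∈ Hx (x - 1) ⊔ Hx x ⊔ Hx (x + 1)) ∧
  (∀ x : ℤ, LinearMap.rank (((P (x + 1)).comp ((clm U).comp (P x))).toLinearMap) ≤ 1) ∧
  (∀ x : ℤ, LinearMap.rank (((P (x - 1)).comp ((clm U).comp (P x))).toLinearMap) ≤ 1)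

local notation "⟪" x ", " y "⟫" => @inner ℂ H _ x y

lemma coord_eq (f : H) (x : ℤ) (i : Fin 2) : ⟪e x i, f⟫ = f (x, i) := by
  rw [e, lp.inner_single_left]
  simp [RCLike.inner_apply]

lemma e_apply_self (x : ℤ) (i : Fin 2) : (e x i) (x, i) = 1 :=
  lp.single_apply_self 2 (x, i) 1

lemma e_apply_ne (x : ℤ) (i : Fin 2) {q : ℤ × Fin 2} (h : q ≠ (x, i)) : (e x i) q = 0 :=
  lp.single_apply_ne 2 (x, i) 1 h

lemma mem_Hx_iff {f : H} {x : ℤ} : f ∈ Hx x ↔ ∃ a b : ℂ, a • e x 0 + b • e x 1 = f :=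
  Submodule.mem_span_pair

lemma coord_zero_of_mem {f : H} {x : ℤ} (hf : f ∈ Hx x) {x' : ℤ} (h : x' ≠ x) (i : Fin 2) :
    f (x', i) = 0 := by
  obtain ⟨a, b, rfl⟩ := mem_Hx_iff.1 hf
  have h0 : (x', i) ≠ (x, (0 : Fin 2)) := by simp [Prod.ext_iff, h]
  have h1 : (x', i) ≠ (x, (1 : Fin 2)) := by simp [Prod.ext_iff, h]
  have : ((a • e x 0 + b • e x 1 : H) : ∀ q : ℤ × Fin 2, ℂ) (x', i)
      = a • (e x 0) (x', i) + b • (e x 1) (x', i) := by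
    rw [lp.coeFn_add, lp.coeFn_smul, lp.coeFn_smul]; rfl
  rw [this, e_apply_ne x 0 h0, e_apply_ne x 1 h1]
  simp

lemma mem_Hx_of_support {f : H} {x : ℤ} (h : ∀ x' : ℤ, x' ≠ x → ∀ i : Fin 2, f (x', i) = 0) :
    f ∈ Hx x := by
  have hf : f = f (x, 0) • e x 0 + f (x, 1) • e x 1 := by
    apply lp.ext
    funext q
    obtain ⟨x', i⟩ := q
    have hco : ((f (x, 0) • e x 0 + f (x, 1) • e x 1 : H) : ∀ q : ℤ × Fin 2, ℂ) (x', i)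
        = f (x, 0) • (e x 0) (x', i) + f (x, 1) • (e x 1) (x', i) := by
      rw [lp.coeFn_add, lp.coeFn_smul, lp.coeFn_smul]; rfl
    show f (x', i) = _
    by_cases hx : x' = x
    · subst hx
      have h01 : i = 0 ∨ i = 1 := by fin_cases i <;> simp
      rcases h01 with rfl | rfl
      · rw [hco, e_apply_self, e_apply_ne x' 1 (show (x', (0:Fin 2)) ≠ (x', (1:Fin 2)) by simp)]
        simp
      · rw [hco, e_apply_self, e_apply_ne x' 0 (show (x', (1:Fin 2)) ≠ (x', (0:Fin 2)) by simp)]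
        simp
    · rw [h x' hx i, hco, e_apply_ne x 0 (by simp [Prod.ext_iff, hx]),
        e_apply_ne x 1 (by simp [Prod.ext_iff, hx])]
      simp
  rw [hf]
  exact add_mem (Submodule.smul_mem _ _ (Submodule.subset_span (by simp)))
    (Submodule.smul_mem _ _ (Submodule.subset_span (by simp)))

lemma norm_e (x : ℤ) (i : Fin 2) : ‖e x i‖ = 1 := by
  have := lp.norm_single (p := 2) (E := fun _ : ℤ × Fin 2 => ℂ) (by norm_num)
    (x, i) (1 : ℂ)
  simpa [e] using this

set_option maxHeartbeats 1000000 in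
set_option maxRecDepth 8000 in
lemma finrank_span_pair {a b : H} (ha : ‖a‖ = 1) (hb : ‖b‖ = 1) (hab : ⟪a, b⟫ = 0) :
    Module.finrank ℂ (Submodule.span ℂ ({a, b} : Set H)) = 2 := by
  have horth : Orthonormal ℂ (![a, b] : Fin 2 → H) := by
    constructor
    · intro i
      fin_cases i <;> simpa
    · intro i j hij
      fin_cases i <;> fin_cases j <;> first
        | exact absurd rfl hij
        | simpa using hab
        | (show (inner ℂ b a : ℂ) = 0
           rw [show (inner ℂ b a : ℂ) = (starRingEnd ℂ) (inner ℂ a b) from (inner_conj_symm b a).symm,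
            hab, map_zero])
  have hli := horth.linearIndependent
  have hrange : Set.range (![a, b] : Fin 2 → H) = {a, b} := by
    simp [Matrix.range_cons, Matrix.range_empty, Set.insert_comm, Set.pair_comm]
  have hcard := finrank_span_eq_card (R := ℂ) hli
  rw [hrange] at hcard
  simpa using hcard

lemma span_pair_eq_of_le {u v u' v' : H} (hu : ‖u‖ = 1) (hv : ‖v‖ = 1) (huv : ⟪u, v⟫ = 0)
    (hu' : ‖u'‖ = 1) (hv' : ‖v'‖ = 1) (huv' : ⟪u', v'⟫ = 0)
    (hle : Submodule.span ℂ {u, v} ≤ Submodule.span ℂ {u', v'}) :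
    Submodule.span ℂ {u, v} = Submodule.span ℂ {u', v'} := by
  haveI : FiniteDimensional ℂ (Submodule.span ℂ ({u', v'} : Set H)) :=
    FiniteDimensional.span_of_finite ℂ (Set.toFinite _)
  refine Submodule.eq_of_le_of_finrank_le hle ?_
  rw [finrank_span_pair hu hv huv, finrank_span_pair hu' hv' huv']

lemma inner_sites {x x' : ℤ} (h : x ≠ x') {f g : H} (hf : f ∈ Hx x) (hg : g ∈ Hx x') :
    ⟪f, g⟫ = 0 := by
  obtain ⟨a, b, rfl⟩ := mem_Hx_iff.1 hf
  rw [inner_add_left, inner_smul_left, inner_smul_left, coord_eq, coord_eq,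
    coord_zero_of_mem hg h 0, coord_zero_of_mem hg h 1]
  simp

lemma e_mem_Hx (x : ℤ) (i : Fin 2) : e x i ∈ Hx x := by
  have h01 : i = 0 ∨ i = 1 := by fin_cases i <;> simp
  rcases h01 with rfl | rfl
  · exact Submodule.subset_span (by simp)
  · exact Submodule.subset_span (by simp)

lemma inner_e_e_ne (x : ℤ) : ⟪e x 0, e x 1⟫ = 0 := by
  rw [coord_eq]
  exact e_apply_ne x 1 (by simp)

lemma Hx_eq_span {x : ℤ} {u v : H} (hu : u ∈ Hx x) (hv : v ∈ Hx x)
    (hun : ‖u‖ = 1) (hvn : ‖v‖ = 1) (huv : ⟪u, v⟫ = 0) :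
    Hx x = Submodule.span ℂ {u, v} := by
  have hle : Submodule.span ℂ {u, v} ≤ Hx x := by
    rw [Submodule.span_le, Set.insert_subset_iff, Set.singleton_subset_iff]
    exact ⟨hu, hv⟩
  exact (span_pair_eq_of_le hun hvn huv (norm_e x 0) (norm_e x 1) (inner_e_e_ne x) hle).symm

lemma mem_onb {x : ℤ} {u v : H} (hu : u ∈ Hx x) (hv : v ∈ Hx x)
    (hun : ‖u‖ = 1) (hvn : ‖v‖ = 1) (huv : ⟪u, v⟫ = 0) {w : H} (hw : w ∈ Hx x) :
    ∃ a b : ℂ, a • u + b • v = w := by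
  rw [Hx_eq_span hu hv hun hvn huv] at hw
  exact Submodule.mem_span_pair.1 hw

/-- If for some `y` we have
`U P_y = |η₁ʸ⟩⟨ζ₁ʸ| + |η₂^{y+1}⟩⟨ζ₂ʸ|`, then there are orthonormal bases
`{ζ₁ˣ, ζ₂ˣ}` of every `H_x` with `U ζ₁ˣ = η₁ˣ` and `U ζ₂ˣ = η₂^{x+1}`,
i.e. `U = Σ_x |η₁ˣ⟩⟨ζ₁ˣ| + |η₂^{x+1}⟩⟨ζ₂ˣ|`. -/
theorem exclude_case_two (U : H ≃ₗᵢ[ℂ] H) (hU : SSQW U) (η₁ η₂ : ℤ → H)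
    (hη : ∀ x : ℤ, ONBx x (η₁ x) (η₂ x))
    (hrange : ∀ x : ℤ, ∀ ψ ∈ Hx x,
      U ψ ∈ Submodule.span ℂ {η₁ (x - 1)} ⊔ Hx x ⊔ Submodule.span ℂ {η₂ (x + 1)})
    (y : ℤ) (ζ₁ ζ₂ : H) (hζ : ONBx y ζ₁ ζ₂)
    (hUPy : (clm U).comp (P y) = ketbra (η₁ y) ζ₁ + ketbra (η₂ (y + 1)) ζ₂) :
    ∃ ζ₁' ζ₂' : ℤ → H, (∀ x : ℤ, ONBx x (ζ₁' x) (ζ₂' x)) ∧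
      ∀ x : ℤ, U (ζ₁' x) = η₁ x ∧ U (ζ₂' x) = η₂ (x + 1) := by
  obtain ⟨hζ₁m, hζ₂m, hζ₁n, hζ₂n, hζ₁₂⟩ := hζ
  -- basic facts about η
  have hη1m : ∀ x, η₁ x ∈ Hx x := fun x => (hη x).1
  have hη2m : ∀ x, η₂ x ∈ Hx x := fun x => (hη x).2.1
  have hη1n : ∀ x, ‖η₁ x‖ = 1 := fun x => (hη x).2.2.1
  have hη2n : ∀ x, ‖η₂ x‖ = 1 := fun x => (hη x).2.2.2.1
  have hη12 : ∀ x, ⟪η₁ x, η₂ x⟫ = 0 := fun x => (hη x).2.2.2.2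
  have hη21 : ∀ x, ⟪η₂ x, η₁ x⟫ = 0 := fun x => by
    rw [← inner_conj_symm, hη12 x, map_zero]
  -- decomposition coming from hrange
  have hdec : ∀ x : ℤ, ∀ ψ ∈ Hx x, ∃ a b : ℂ, ∃ w ∈ Hx x,
      (U ψ : H) = a • η₁ (x - 1) + w + b • η₂ (x + 1) := by
    intro x ψ hψ
    have h := hrange x ψ hψ
    rw [Submodule.mem_sup] at h
    obtain ⟨p, hp, q, hq, hpq⟩ := h
    rw [Submodule.mem_sup] at hp
    obtain ⟨r, hr, w, hw, hrw⟩ := hp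
    rw [Submodule.mem_span_singleton] at hr hq
    obtain ⟨a, rfl⟩ := hr
    obtain ⟨b, rfl⟩ := hq
    exact ⟨a, b, w, hw, by rw [← hpq, ← hrw]⟩
  have hsymm_inner : ∀ v w : H, ⟪v, U.symm w⟫ = ⟪U v, w⟫ := by
    intro v w
    conv_rhs => rw [← U.apply_symm_apply w]
    rw [U.inner_map_map]
  -- base case
  have hbase1 : U ζ₁ = η₁ y := by
    have h1 : ((clm U).comp (P y)) ζ₁ = U ζ₁ := by
      have hP : P y ζ₁ = ζ₁ := by
        obtain ⟨a, b, rfl⟩ := mem_Hx_iff.1 hζ₁m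
        show ⟪e y 0, _⟫ • e y 0 + ⟪e y 1, _⟫ • e y 1 = _
        rw [inner_add_right, inner_add_right, inner_smul_right, inner_smul_right,
          inner_smul_right, inner_smul_right, inner_e_e_ne y,
          show ⟪e y 1, e y 0⟫ = 0 by rw [← inner_conj_symm, inner_e_e_ne y, map_zero],
          show ⟪e y 0, e y 0⟫ = 1 by
            rw [inner_self_eq_norm_sq_to_K, norm_e]; norm_num,
          show ⟪e y 1, e y 1⟫ = 1 by
            rw [inner_self_eq_norm_sq_to_K, norm_e]; norm_num]
        ring_nf
      rw [ContinuousLinearMap.comp_apply, hP]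
      rfl
    rw [hUPy] at h1
    have h2 : (ketbra (η₁ y) ζ₁ + ketbra (η₂ (y + 1)) ζ₂) ζ₁
        = ⟪ζ₁, ζ₁⟫ • η₁ y + ⟪ζ₂, ζ₁⟫ • η₂ (y + 1) := rfl
    rw [h2, show ⟪ζ₁, ζ₁⟫ = 1 by rw [inner_self_eq_norm_sq_to_K, hζ₁n]; norm_num,
      show ⟪ζ₂, ζ₁⟫ = 0 by rw [← inner_conj_symm, hζ₁₂, map_zero]] at h1
    rw [← h1]
    simp
  have hbase2 : U ζ₂ = η₂ (y + 1) := by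
    have h1 : ((clm U).comp (P y)) ζ₂ = U ζ₂ := by
      have hP : P y ζ₂ = ζ₂ := by
        obtain ⟨a, b, rfl⟩ := mem_Hx_iff.1 hζ₂m
        show ⟪e y 0, _⟫ • e y 0 + ⟪e y 1, _⟫ • e y 1 = _
        rw [inner_add_right, inner_add_right, inner_smul_right, inner_smul_right,
          inner_smul_right, inner_smul_right, inner_e_e_ne y,
          show ⟪e y 1, e y 0⟫ = 0 by rw [← inner_conj_symm, inner_e_e_ne y, map_zero],
          show ⟪e y 0, e y 0⟫ = 1 by
            rw [inner_self_eq_norm_sq_to_K, norm_e]; norm_num,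
          show ⟪e y 1, e y 1⟫ = 1 by
            rw [inner_self_eq_norm_sq_to_K, norm_e]; norm_num]
        ring_nf
      rw [ContinuousLinearMap.comp_apply, hP]
      rfl
    rw [hUPy] at h1
    have h2 : (ketbra (η₁ y) ζ₁ + ketbra (η₂ (y + 1)) ζ₂) ζ₂
        = ⟪ζ₁, ζ₂⟫ • η₁ y + ⟪ζ₂, ζ₂⟫ • η₂ (y + 1) := rfl
    rw [h2, show ⟪ζ₂, ζ₂⟫ = 1 by rw [inner_self_eq_norm_sq_to_K, hζ₂n]; norm_num,
      hζ₁₂] at h1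
    rw [← h1]
    simp
  -- the inductive invariant
  have key : ∀ z : ℤ, U.symm (η₁ z) ∈ Hx z ∧ U.symm (η₂ (z + 1)) ∈ Hx z := by
    intro z
    refine Int.inductionOn' z y ?_ ?_ ?_
    · constructor
      · rw [show U.symm (η₁ y) = ζ₁ by rw [← hbase1, U.symm_apply_apply]]
        exact hζ₁m
      · rw [show U.symm (η₂ (y + 1)) = ζ₂ by rw [← hbase2, U.symm_apply_apply]]
        exact hζ₂m
    · intro k hk ih
      obtain ⟨ih1, ih2⟩ := ih
      have hζ1k : U (U.symm (η₁ k)) = η₁ k := U.apply_symm_apply _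
      have hζ2k : U (U.symm (η₂ (k + 1))) = η₂ (k + 1) := U.apply_symm_apply _
      have hclaim : ∀ ψ ∈ Hx (k + 1),
          (U ψ : H) ∈ Submodule.span ℂ {η₁ (k + 1), η₂ (k + 2)} := by
        intro ψ hψ
        obtain ⟨a, b, w, hw, hdc⟩ := hdec (k + 1) ψ hψ
        rw [show (k + 1 - 1 : ℤ) = k by ring, show (k + 1 + 1 : ℤ) = k + 2 by ring] at hdc
        obtain ⟨c, d, hcd⟩ := mem_onb (hη1m (k + 1)) (hη2m (k + 1)) (hη1n (k + 1))
          (hη2n (k + 1)) (hη12 (k + 1)) hw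
        have ha : a = 0 := by
          have h1 : ⟪η₁ k, U ψ⟫ = 0 := by
            rw [← hζ1k, U.inner_map_map]
            exact inner_sites (by omega) ih1 hψ
          rw [hdc, inner_add_right, inner_add_right, inner_smul_right, inner_smul_right,
            show ⟪η₁ k, η₁ k⟫ = 1 by rw [inner_self_eq_norm_sq_to_K, hη1n]; norm_num,
            inner_sites (by omega) (hη1m k) hw,
            inner_sites (by omega) (hη1m k) (hη2m (k + 2))] at h1
          simpa using h1
        have hd : d = 0 := by
          have h1 : ⟪η₂ (k + 1), U ψ⟫ = 0 := by
            rw [← hζ2k, U.inner_map_map]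
            exact inner_sites (by omega) ih2 hψ
          rw [hdc, ← hcd, inner_add_right, inner_add_right, inner_add_right,
            inner_smul_right, inner_smul_right, inner_smul_right, inner_smul_right,
            inner_sites (by omega) (hη2m (k + 1)) (hη1m k),
            hη21 (k + 1),
            show ⟪η₂ (k + 1), η₂ (k + 1)⟫ = 1 by
              rw [inner_self_eq_norm_sq_to_K, hη2n]; norm_num,
            inner_sites (by omega) (hη2m (k + 1)) (hη2m (k + 2))] at h1
          simpa using h1
        refine Submodule.mem_span_pair.2 ⟨c, b, ?_⟩
        rw [hdc, ← hcd, ha, hd]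
        module
      have hsp : Submodule.span ℂ {U (e (k + 1) 0), U (e (k + 1) 1)}
          = Submodule.span ℂ {η₁ (k + 1), η₂ (k + 2)} := by
        apply span_pair_eq_of_le
        · rw [U.norm_map]; exact norm_e _ _
        · rw [U.norm_map]; exact norm_e _ _
        · rw [U.inner_map_map]; exact inner_e_e_ne _
        · exact hη1n _
        · exact hη2n _
        · exact inner_sites (by omega) (hη1m (k + 1)) (hη2m (k + 2))
        · rw [Submodule.span_le, Set.insert_subset_iff, Set.singleton_subset_iff]
          exact ⟨hclaim _ (e_mem_Hx _ 0), hclaim _ (e_mem_Hx _ 1)⟩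
      constructor
      · have h1 : η₁ (k + 1) ∈ Submodule.span ℂ {U (e (k + 1) 0), U (e (k + 1) 1)} := by
          rw [hsp]; exact Submodule.subset_span (by simp)
        obtain ⟨a, b, hab⟩ := Submodule.mem_span_pair.1 h1
        have hU : U (a • e (k + 1) 0 + b • e (k + 1) 1) = η₁ (k + 1) := by
          rw [map_add, map_smul, map_smul]; exact hab
        rw [show U.symm (η₁ (k + 1)) = a • e (k + 1) 0 + b • e (k + 1) 1 by
          rw [← hU, U.symm_apply_apply]]
        exact mem_Hx_iff.2 ⟨a, b, rfl⟩
      · rw [show (k + 1 + 1 : ℤ) = k + 2 by ring]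
        have h1 : η₂ (k + 2) ∈ Submodule.span ℂ {U (e (k + 1) 0), U (e (k + 1) 1)} := by
          rw [hsp]; exact Submodule.subset_span (by simp)
        obtain ⟨a, b, hab⟩ := Submodule.mem_span_pair.1 h1
        have hU : U (a • e (k + 1) 0 + b • e (k + 1) 1) = η₂ (k + 2) := by
          rw [map_add, map_smul, map_smul]; exact hab
        rw [show U.symm (η₂ (k + 2)) = a • e (k + 1) 0 + b • e (k + 1) 1 by
          rw [← hU, U.symm_apply_apply]]
        exact mem_Hx_iff.2 ⟨a, b, rfl⟩
    · intro k hk ih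
      obtain ⟨ih1, ih2⟩ := ih
      have hζ1k : U (U.symm (η₁ k)) = η₁ k := U.apply_symm_apply _
      have hζ2k : U (U.symm (η₂ (k + 1))) = η₂ (k + 1) := U.apply_symm_apply _
      have hn1 : ‖U.symm (η₁ k)‖ = 1 := by
        rw [U.symm.norm_map]; exact hη1n k
      have hn2 : ‖U.symm (η₂ (k + 1))‖ = 1 := by
        rw [U.symm.norm_map]; exact hη2n (k + 1)
      have hi12 : ⟪U.symm (η₁ k), U.symm (η₂ (k + 1))⟫ = 0 := by
        rw [U.symm.inner_map_map]
        exact inner_sites (by omega) (hη1m k) (hη2m (k + 1))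
      have hmem : ∀ v : H, ∀ z : ℤ,
          (∀ x : ℤ, x ≠ z → ∀ ψ ∈ Hx x, ⟪U ψ, v⟫ = 0) → U.symm v ∈ Hx z := by
        intro v z hv
        apply mem_Hx_of_support
        intro x' hx' i
        rw [show ((U.symm v : H) (x', i)) = ⟪e x' i, U.symm v⟫ from (coord_eq _ _ _).symm,
          hsymm_inner]
        exact hv x' hx' (e x' i) (e_mem_Hx x' i)
      have hcase_k : ∀ ψ ∈ Hx k, ∃ a b : ℂ, (U ψ : H) = a • η₁ k + b • η₂ (k + 1) := by
        intro ψ hψ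
        obtain ⟨a, b, hab⟩ := mem_onb ih1 ih2 hn1 hn2 hi12 hψ
        exact ⟨a, b, by rw [← hab, map_add, map_smul, map_smul, hζ1k, hζ2k]⟩
      have hpart2 : U.symm (η₂ k) ∈ Hx (k - 1) := by
        apply hmem
        intro x hx ψ hψ
        by_cases hxk : x = k
        · subst hxk
          obtain ⟨a, b, hab⟩ := hcase_k ψ hψ
          rw [hab, inner_add_left, inner_smul_left, inner_smul_left, hη12 x,
            inner_sites (by omega) (hη2m (x + 1)) (hη2m x)]
          simp
        · obtain ⟨a, b, w, hw, hdc⟩ := hdec x ψ hψ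
          rw [hdc, inner_add_left, inner_add_left, inner_smul_left, inner_smul_left,
            inner_sites hxk hw (hη2m k)]
          by_cases hx1 : x - 1 = k
          · rw [hx1, hη12 k,
              inner_sites (show x + 1 ≠ k by omega) (hη2m (x + 1)) (hη2m k)]
            simp
          · rw [inner_sites hx1 (hη1m (x - 1)) (hη2m k),
              inner_sites (show x + 1 ≠ k by omega) (hη2m (x + 1)) (hη2m k)]
            simp
      have hpart1 : U.symm (η₁ (k - 1)) ∈ Hx (k - 1) := by
        apply hmem
        intro x hx ψ hψ
        by_cases hxk : x = k
        · subst hxk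
          obtain ⟨a, b, hab⟩ := hcase_k ψ hψ
          rw [hab, inner_add_left, inner_smul_left, inner_smul_left,
            inner_sites (show x ≠ x - 1 by omega) (hη1m x) (hη1m (x - 1)),
            inner_sites (show x + 1 ≠ x - 1 by omega) (hη2m (x + 1)) (hη1m (x - 1))]
          simp
        · obtain ⟨a, b, w, hw, hdc⟩ := hdec x ψ hψ
          rw [hdc, inner_add_left, inner_add_left, inner_smul_left, inner_smul_left,
            inner_sites hx hw (hη1m (k - 1)),
            inner_sites (show x - 1 ≠ k - 1 by omega) (hη1m (x - 1)) (hη1m (k - 1))]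
          by_cases hx1 : x + 1 = k - 1
          · rw [hx1, hη21 (k - 1)]
            simp
          · rw [inner_sites hx1 (hη2m (x + 1)) (hη1m (k - 1))]
            simp
      exact ⟨hpart1, by rw [show (k - 1 + 1 : ℤ) = k by ring]; exact hpart2⟩
  refine ⟨fun x => U.symm (η₁ x), fun x => U.symm (η₂ (x + 1)), fun x => ?_, fun x => ?_⟩
  · refine ⟨(key x).1, (key x).2, ?_, ?_, ?_⟩
    · rw [LinearIsometryEquiv.norm_map]; exact hη1n x
    · rw [LinearIsometryEquiv.norm_map]; exact hη2n (x + 1)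
    · rw [U.symm.inner_map_map]
      exact inner_sites (by omega) (hη1m x) (hη2m (x + 1))
  · exact ⟨U.apply_symm_apply _, U.apply_symm_apply _⟩
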